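/- Let g be a continuous distortion function and set α_{n−1} = g((n−1)/n). Then for every α with α_{n−1} < α < 1 and every x ∈ ℝⁿ, the non-scaled generalized-ES norm satisfies ⟨⟨x⟩⟩_α^{g} = n(1−α) |x|_(n), where |x|_(n) = max_{1≤i≤n} |x_i|. -/

import Mathlib

open Finset

/-- The absolute values of the components of `x`, arranged in increasing order:
`absSorted x i` is `|x|_(i+1)` in the paper's notation. -/
noncomputable def absSorted {n : ℕ} (x : Fin n → ℝ) : Fin n → ℝ :=
  fun i => |x (Tuple.sort (fun j => |x j|) i)|

/-- `coeff n g i = g((i+1)/n) - g(i/n)`, the paper's `c_{i+1}`. -/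
noncomputable def coeff (n : ℕ) (g : ℝ → ℝ) (i : Fin n) : ℝ :=
  g (((i : ℕ) + 1 : ℝ) / n) - g (((i : ℕ) : ℝ) / n)

/-- The objective function whose infimum over `t` defines the scaled generalized-ES norm. -/
noncomputable def sgesObj {n : ℕ} (g : ℝ → ℝ) (α : ℝ) (x : Fin n → ℝ) (t : ℝ) : ℝ :=
  t + (1 - α)⁻¹ * ∑ i, coeff n g i * max (absSorted x i - t) 0

/-- The scaled generalized-ES norm `⟨⟨x⟩⟩_α^{S,g}`. -/
noncomputable def sges {n : ℕ} (g : ℝ → ℝ) (α : ℝ) (x : Fin n → ℝ) : ℝ :=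
  ⨅ t : ℝ, sgesObj g α x t

/-- The non-scaled generalized-ES norm `⟨⟨x⟩⟩_α^{g} = n(1-α)⟨⟨x⟩⟩_α^{S,g}`. -/
noncomputable def nges {n : ℕ} (g : ℝ → ℝ) (α : ℝ) (x : Fin n → ℝ) : ℝ :=
  (n : ℝ) * (1 - α) * sges g α x

/-- The dual norm of a (norm) functional `N` on `ℝⁿ`. -/
noncomputable def dualNorm {n : ℕ} (N : (Fin n → ℝ) → ℝ) (y : Fin n → ℝ) : ℝ :=
  sSup {r : ℝ | ∃ x : Fin n → ℝ, N x ≤ 1 ∧ r = ∑ i, x i * y i}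

/-- The ordered weighted L1 (OWL) norm. -/
noncomputable def owl {n : ℕ} (w : Fin n → ℝ) (x : Fin n → ℝ) : ℝ :=
  ∑ i, w i * absSorted x i

/-- for `g((n-1)/n) < α < 1`, the non-scaled generalized-ES norm equals
`n(1-α)` times the maximum absolute entry `|x|₍ₙ₎`. -/
theorem stmt12 (n : ℕ) (hn : 1 ≤ n) (g : ℝ → ℝ)
    (hg_mono : MonotoneOn g (Set.Icc 0 1)) (hg0 : g 0 = 0) (hg1 : g 1 = 1)
    (hg_cont : ContinuousOn g (Set.Icc 0 1))
    (α : ℝ) (hα1 : g (((n : ℝ) - 1) / n) < α) (hα2 : α < 1) (x : Fin n → ℝ) :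
    nges g α x = (n : ℝ) * (1 - α) * ⨆ i, |x i| := by
  have hne : Nonempty (Fin n) := ⟨⟨0, hn⟩⟩
  set M : ℝ := ⨆ i, |x i| with hM
  have hbdd : BddAbove (Set.range fun i => |x i|) := Set.Finite.bddAbove (Set.finite_range _)
  have hle : ∀ i, |x i| ≤ M := fun i => le_ciSup hbdd i
  have hsle : ∀ i, absSorted x i ≤ M := fun i => hle _
  -- positive n
  have hnpos : (0:ℝ) < n := by exact_mod_cast hn
  -- coefficients nonneg
  have hcpos : ∀ i : Fin n, 0 ≤ coeff n g i := by
    intro i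
    have h1 : ((i:ℕ):ℝ)/n ∈ Set.Icc (0:ℝ) 1 := by
      constructor
      · positivity
      · rw [div_le_one hnpos]; exact_mod_cast (i.isLt.le)
    have h2 : (((i:ℕ):ℝ)+1)/n ∈ Set.Icc (0:ℝ) 1 := by
      constructor
      · positivity
      · rw [div_le_one hnpos]; exact_mod_cast i.isLt
    exact sub_nonneg.mpr (hg_mono h1 h2 (by gcongr <;> linarith))
  -- last index
  set ilast : Fin n := ⟨n-1, by omega⟩ with hilast
  have hclast : 1 - α < coeff n g ilast := by
    have h1 : (((ilast:ℕ):ℝ)+1)/n = 1 := by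
      have : ((ilast:ℕ):ℝ) = (n:ℝ) - 1 := by
        simp only [hilast]
        push_cast [Nat.cast_sub hn]
        ring
      rw [this]; field_simp; ring
    have h2 : (((ilast:ℕ):ℝ))/n = ((n:ℝ)-1)/n := by
      congr 1
      simp only [hilast]
      push_cast [Nat.cast_sub hn]
      ring
    unfold coeff
    rw [h1, h2, hg1]
    linarith
  -- sorted last equals M
  have hmono : Monotone (absSorted x) := Tuple.monotone_sort (fun j => |x j|)
  have hMlast : absSorted x ilast = M := by
    obtain ⟨j, _, hj⟩ := Finset.exists_max_image Finset.univ (fun k => |x k|) ⟨⟨0, hn⟩, mem_univ _⟩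
    have hMj : M = |x j| := le_antisymm (ciSup_le fun k => hj k (mem_univ k)) (hle j)
    have : absSorted x ((Tuple.sort (fun j => |x j|)).symm j) = |x j| := by
      unfold absSorted; rw [Equiv.apply_symm_apply]
    have hle1 : |x j| ≤ absSorted x ilast := by
      rw [← this]
      apply hmono
      have hk := ((Tuple.sort (fun j => |x j|)).symm j).isLt
      rw [Fin.le_def]
      simp only [hilast]
      omega
    exact le_antisymm (hsle ilast) (hMj ▸ hle1)
  have hαpos : (0:ℝ) < 1 - α := by linarith
  -- lower bound
  have hlb : ∀ t : ℝ, M ≤ sgesObj g α x t := by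
    intro t
    by_cases ht : M ≤ t
    · have hsum : ∑ i, coeff n g i * max (absSorted x i - t) 0 = 0 := by
        apply Finset.sum_eq_zero
        intro i _
        have : max (absSorted x i - t) 0 = 0 := max_eq_right (by linarith [hsle i])
        rw [this, mul_zero]
      unfold sgesObj
      rw [hsum, mul_zero]
      linarith
    · push_neg at ht
      have hterm : coeff n g ilast * max (absSorted x ilast - t) 0
          ≤ ∑ i, coeff n g i * max (absSorted x i - t) 0 := by
        apply Finset.single_le_sum (f := fun i => coeff n g i * max (absSorted x i - t) 0)
          (fun i _ => mul_nonneg (hcpos i) (le_max_right _ _)) (mem_univ ilast)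
      have h1 : (1-α) * (M - t) ≤ coeff n g ilast * max (absSorted x ilast - t) 0 := by
        rw [hMlast, max_eq_left (by linarith)]
        apply mul_le_mul hclast.le le_rfl (by linarith) (by linarith)
      have h2 : (1-α) * (M - t) ≤ ∑ i, coeff n g i * max (absSorted x i - t) 0 := le_trans h1 hterm
      unfold sgesObj
      have : M - t ≤ (1-α)⁻¹ * ∑ i, coeff n g i * max (absSorted x i - t) 0 := by
        calc M - t = (1-α)⁻¹ * ((1-α) * (M-t)) := by field_simp
        _ ≤ _ := mul_le_mul_of_nonneg_left h2 (by positivity)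
      linarith
  have hub : sgesObj g α x M = M := by
    unfold sgesObj
    have hsum : ∑ i, coeff n g i * max (absSorted x i - M) 0 = 0 := by
      apply Finset.sum_eq_zero
      intro i _
      rw [max_eq_right (by linarith [hsle i]), mul_zero]
    rw [hsum, mul_zero, add_zero]
  have hsges : sges g α x = M := by
    apply le_antisymm
    · calc sges g α x ≤ sgesObj g α x M := ciInf_le ⟨M, fun v ⟨t, ht⟩ => ht ▸ hlb t⟩ M
      _ = M := hub
    · exact le_ciInf hlb
  unfold nges
  rw [hsges]
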